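/- (Constraint violations.) Let x* ∈ X be an optimal solution of min{ f(x) : g_k(x) ≤ 0 ∀k, x ∈ X }, let λ* ≥ 0 (componentwise) satisfy inf_{x ∈ X}( f(x) + Σ_k λ*_k g_k(x) ) = f(x*), and set D = β² + L_f + 2‖λ*‖‖L_g‖ + 2C‖L_g‖. If the step size γ > 0 satisfies D + ‖L_g‖·R/√γ − 1/γ ≤ 0, then for every t ≥ 1 and every k ∈ {1,…,m}, the running average x̄(t) = (1/t) Σ_{τ=0}^{t−1} x(τ) satisfies g_k(x̄(t)) ≤ (1/t)(2‖λ*‖ + R/√γ + C). -/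

import Mathlib

open scoped RealInnerProductSpace

section AuxCVB

variable {E : Type*} [NormedAddCommGroup E] [InnerProductSpace ℝ E] [CompleteSpace E]

/-- Derivative of a function along a line, via its gradient. -/
lemma cvb_hasDerivAt_line (f : E → ℝ) (Gf : E → E)
    (hfd : ∀ z, HasGradientAt f (Gf z) z) (a v : E) (t : ℝ) :
    HasDerivAt (fun s : ℝ => f (a + s • v)) ⟪Gf (a + t • v), v⟫ t := by
  have hline : HasDerivAt (fun s : ℝ => a + s • v) v t := by
    simpa using ((hasDerivAt_id t).smul_const v).const_add a
  have hF := (hfd (a + t • v)).hasFDerivAt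
  have := hF.comp_hasDerivAt t hline
  simpa [InnerProductSpace.toDual_apply_apply, Function.comp_def] using this

/-- Gradient inequality for convex functions. -/
lemma cvb_grad_convex_ineq {X : Set E} (f : E → ℝ) (Gf : E → E)
    (hf : ConvexOn ℝ X f) (hfd : ∀ z, HasGradientAt f (Gf z) z)
    {a b : E} (ha : a ∈ X) (hb : b ∈ X) :
    f a + ⟪Gf a, b - a⟫ ≤ f b := by
  set v := b - a with hv
  have hφ : HasDerivAt (fun s : ℝ => f (a + s • v)) ⟪Gf a, v⟫ 0 := by
    simpa using cvb_hasDerivAt_line f Gf hfd a v 0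
  have hslope : ∀ t ∈ Set.Ioc (0:ℝ) 1,
      slope (fun s : ℝ => f (a + s • v)) 0 t ≤ f b - f a := by
    intro t ht
    have hcomb : a + t • v = (1 - t) • a + t • b := by
      rw [hv]; rw [smul_sub, sub_smul, one_smul]; abel
    have hcv := hf.2 ha hb (by linarith [ht.2] : (0:ℝ) ≤ 1 - t) (le_of_lt ht.1) (by ring)
    rw [← hcomb] at hcv
    have ht0 : (0:ℝ) < t := ht.1
    rw [slope_def_field, div_le_iff₀ (by linarith : (0:ℝ) < t - 0)]
    simp only [zero_smul, add_zero, smul_eq_mul] at hcv ⊢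
    nlinarith [hcv]
  have htend : Filter.Tendsto (slope (fun s : ℝ => f (a + s • v)) 0)
      (nhdsWithin 0 (Set.Ioi 0)) (nhds ⟪Gf a, v⟫) := by
    have := hasDerivAt_iff_tendsto_slope.1 hφ
    exact this.mono_left (nhdsWithin_mono 0 (fun y hy => Set.mem_compl_singleton_iff.2 (ne_of_gt hy)))
  have hev : ∀ᶠ t in nhdsWithin (0:ℝ) (Set.Ioi 0),
      slope (fun s : ℝ => f (a + s • v)) 0 t ≤ f b - f a := by
    filter_upwards [Ioc_mem_nhdsGT_of_mem (Set.left_mem_Ico.2 one_pos)] with t ht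
    exact hslope t ht
  have := le_of_tendsto htend hev
  linarith [this]

/-- Descent lemma for functions with Lipschitz gradient on a convex set. -/
lemma cvb_descent_lemma {X : Set E} (hX : Convex ℝ X) (f : E → ℝ) (Gf : E → E) (L : ℝ)
    (hfd : ∀ z, HasGradientAt f (Gf z) z)
    (hLip : ∀ z ∈ X, ∀ w ∈ X, ‖Gf z - Gf w‖ ≤ L * ‖z - w‖)
    {a b : E} (ha : a ∈ X) (hb : b ∈ X) :
    f b ≤ f a + ⟪Gf a, b - a⟫ + L / 2 * ‖b - a‖ ^ 2 := by
  set v := b - a with hv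
  set ψ : ℝ → ℝ := fun t => f (a + t • v) - t * ⟪Gf a, v⟫ - L * t ^ 2 / 2 * ‖v‖ ^ 2 with hψ
  have hmem : ∀ t ∈ Set.Icc (0:ℝ) 1, a + t • v ∈ X := by
    intro t ht
    have hcomb : a + t • v = (1 - t) • a + t • b := by
      rw [hv]; rw [smul_sub, sub_smul, one_smul]; abel
    rw [hcomb]
    exact hX ha hb (by linarith [ht.2]) ht.1 (by ring)
  have hder : ∀ t : ℝ, HasDerivAt ψ
      (⟪Gf (a + t • v), v⟫ - ⟪Gf a, v⟫ - L * t * ‖v‖ ^ 2) t := by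
    intro t
    have h1 := cvb_hasDerivAt_line f Gf hfd a v t
    have h2 : HasDerivAt (fun s : ℝ => s * ⟪Gf a, v⟫) ⟪Gf a, v⟫ t := by
      simpa using (hasDerivAt_id t).mul_const ⟪Gf a, v⟫
    have h3 : HasDerivAt (fun s : ℝ => L * s ^ 2 / 2 * ‖v‖ ^ 2) (L * t * ‖v‖ ^ 2) t := by
      have h4 : HasDerivAt (fun s : ℝ => s ^ 2) (2 * t) t := by
        simpa using hasDerivAt_pow 2 t
      have := ((h4.const_mul L).div_const 2).mul_const (‖v‖ ^ 2)
      exact this.congr_deriv (by ring)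
    simpa [hψ] using (h1.fun_sub h2).fun_sub h3
  have hanti : AntitoneOn ψ (Set.Icc 0 1) := by
    apply antitoneOn_of_deriv_nonpos (convex_Icc 0 1)
    · exact fun t _ => ((hder t).differentiableAt.continuousAt).continuousWithinAt
    · intro t ht
      exact (hder t).differentiableAt.differentiableWithinAt
    · intro t ht
      rw [interior_Icc] at ht
      rw [(hder t).deriv]
      have hmem0 : a + t • v ∈ X := hmem t ⟨le_of_lt ht.1, le_of_lt ht.2⟩
      have h4 : ⟪Gf (a + t • v), v⟫ - ⟪Gf a, v⟫ ≤ L * t * ‖v‖ ^ 2 := by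
        have hcs := real_inner_le_norm (Gf (a + t • v) - Gf a) v
        rw [inner_sub_left] at hcs
        have h5 := hLip _ hmem0 _ ha
        have h6 : a + t • v - a = t • v := by abel
        rw [h6, norm_smul] at h5
        rw [Real.norm_eq_abs, abs_of_pos ht.1] at h5
        nlinarith [mul_le_mul_of_nonneg_right h5 (norm_nonneg v),
          norm_nonneg v, norm_nonneg (Gf (a + t • v) - Gf a)]
      linarith
  have h01 := hanti (Set.left_mem_Icc.2 zero_le_one) (Set.right_mem_Icc.2 zero_le_one) zero_le_one
  simp only [hψ, zero_smul, add_zero, one_smul, zero_mul, one_pow, mul_one, zero_pow,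
    sub_zero] at h01
  have hab : a + v = b := by rw [hv]; abel
  rw [hab] at h01
  nlinarith [h01]

/-- Pushback property of projections onto convex sets. -/
lemma cvb_proj_pushback {X : Set E} (hX : Convex ℝ X) {p xp : E} (hxp : xp ∈ X)
    (hmin : ∀ y ∈ X, ‖xp - p‖ ≤ ‖y - p‖) {y : E} (hy : y ∈ X) :
    ‖xp - p‖ ^ 2 + ‖y - xp‖ ^ 2 ≤ ‖y - p‖ ^ 2 := by
  letI : Nonempty X := ⟨⟨xp, hxp⟩⟩
  have hinf : ‖p - xp‖ = ⨅ w : X, ‖p - w‖ := by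
    apply le_antisymm
    · apply le_ciInf
      intro w
      rw [norm_sub_rev p xp, norm_sub_rev p w]
      exact hmin w w.2
    · exact ciInf_le ⟨0, fun _ ⟨_, h⟩ => h ▸ norm_nonneg _⟩ (⟨xp, hxp⟩ : X)
  have hVI := (norm_eq_iInf_iff_real_inner_le_zero hX hxp).1 hinf y hy
  have hexp : ‖y - p‖ ^ 2 = ‖y - xp‖ ^ 2 + 2 * ⟪y - xp, xp - p⟫ + ‖xp - p‖ ^ 2 := by
    have hsplit : y - p = (y - xp) + (xp - p) := by abel
    rw [hsplit, norm_add_sq_real]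
  have hpos : ⟪y - xp, xp - p⟫ ≥ 0 := by
    have h1 : ⟪p - xp, y - xp⟫ ≤ 0 := hVI
    have h2 : ⟪y - xp, xp - p⟫ = - ⟪p - xp, y - xp⟫ := by
      rw [real_inner_comm]
      rw [show xp - p = -(p - xp) by abel, inner_neg_left]
    linarith [h2 ▸ neg_nonneg.2 h1]
  nlinarith [hexp]

end AuxCVB

/-- The stacked constraint vector `g(x) = (g_1(x), …, g_m(x))` as an element of
Euclidean space `ℝ^m`. -/
noncomputable def gvec {n m : ℕ} (g : Fin m → EuclideanSpace ℝ (Fin n) → ℝ)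
    (x : EuclideanSpace ℝ (Fin n)) : EuclideanSpace ℝ (Fin m) :=
  WithLp.toLp 2 (fun k => g k x)

set_option maxHeartbeats 2000000 in
/-- Constraint violations: the running average `x̄(t) = (1/t) Σ_{τ=0}^{t−1} x(τ)` satisfies `g_k(x̄(t)) ≤ (1/t)(2‖λ*‖ + R/√γ + C)`.
Indexing convention: `x 0` denotes the initial point `x(−1)` and `x (t+1)`
denotes the iterate `x(t)`; thus at iteration `t` of the paper,
`x(t) = x (t+1)`, `x(t−1) = x t`, and `Q(t) = Q t`. -/
theorem constraint_violation_bound {n m : ℕ}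
    (X : Set (EuclideanSpace ℝ (Fin n)))
    (hXne : X.Nonempty) (hXcv : Convex ℝ X) (hXcp : IsCompact X)
    (R : ℝ) (hR : ∀ z ∈ X, ∀ w ∈ X, ‖z - w‖ ≤ R)
    (f : EuclideanSpace ℝ (Fin n) → ℝ)
    (Gf : EuclideanSpace ℝ (Fin n) → EuclideanSpace ℝ (Fin n))
    (g : Fin m → EuclideanSpace ℝ (Fin n) → ℝ)
    (Gg : Fin m → EuclideanSpace ℝ (Fin n) → EuclideanSpace ℝ (Fin n))
    (Lf : ℝ) (Lg : EuclideanSpace ℝ (Fin m)) (β C : ℝ)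
    (hf : ConvexOn ℝ X f)
    (hfd : ∀ z, HasGradientAt f (Gf z) z)
    (hLf : 0 ≤ Lf)
    (hGfLip : ∀ z ∈ X, ∀ w ∈ X, ‖Gf z - Gf w‖ ≤ Lf * ‖z - w‖)
    (hg : ∀ k, ConvexOn ℝ X (g k))
    (hgd : ∀ (k : Fin m) z, HasGradientAt (g k) (Gg k z) z)
    (hLg : ∀ k, 0 ≤ Lg k)
    (hGgLip : ∀ (k : Fin m), ∀ z ∈ X, ∀ w ∈ X, ‖Gg k z - Gg k w‖ ≤ Lg k * ‖z - w‖)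
    (hgLip : ∀ z ∈ X, ∀ w ∈ X, ‖gvec g z - gvec g w‖ ≤ β * ‖z - w‖)
    (hgC : ∀ z ∈ X, ‖gvec g z‖ ≤ C)
    (xstar : EuclideanSpace ℝ (Fin n)) (hxs : xstar ∈ X)
    (hxsFeas : ∀ k, g k xstar ≤ 0)
    (hxsOpt : ∀ z ∈ X, (∀ k, g k z ≤ 0) → f xstar ≤ f z)
    (lam : EuclideanSpace ℝ (Fin m)) (hlam : ∀ k, 0 ≤ lam k)
    (hduality : IsGLB ((fun z => f z + ∑ k, lam k * g k z) '' X) (f xstar))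
    (D : ℝ) (hD : D = β ^ 2 + Lf + 2 * ‖lam‖ * ‖Lg‖ + 2 * C * ‖Lg‖)
    (γ : ℝ) (hγ : 0 < γ)
    (hγcond : D + ‖Lg‖ * R / Real.sqrt γ - 1 / γ ≤ 0)
    (x : ℕ → EuclideanSpace ℝ (Fin n)) (hxX : ∀ t, x t ∈ X)
    (Q : ℕ → EuclideanSpace ℝ (Fin m))
    (hQ0 : ∀ k, Q 0 k = max 0 (-(g k (x 0))))
    (hQr : ∀ (t : ℕ) (k : Fin m),
      Q (t + 1) k = max (-(g k (x (t + 1)))) (Q t k + g k (x (t + 1))))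
    (d : ℕ → EuclideanSpace ℝ (Fin n))
    (hd : ∀ t, d t = Gf (x t) + ∑ k, (Q t k + g k (x t)) • Gg k (x t))
    (hproj : ∀ t, ∀ y ∈ X,
      ‖x (t + 1) - (x t - γ • d t)‖ ≤ ‖y - (x t - γ • d t)‖) :
    ∀ t : ℕ, 1 ≤ t → ∀ k : Fin m,
      g k ((t : ℝ)⁻¹ • ∑ τ ∈ Finset.range t, x (τ + 1)) ≤
        (1 / (t : ℝ)) * (2 * ‖lam‖ + R / Real.sqrt γ + C) := by
  have hsγ : 0 < Real.sqrt γ := Real.sqrt_pos.2 hγ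
  have hR0 : 0 ≤ R := by
    have := hR (x 0) (hxX 0) (x 0) (hxX 0); simpa using this
  have hC0 : 0 ≤ C := le_trans (norm_nonneg _) (hgC (x 0) (hxX 0))
  have hs0 : 0 ≤ R / Real.sqrt γ := div_nonneg hR0 hsγ.le
  set h : ℝ := 2 * ‖lam‖ + R / Real.sqrt γ + C with hh
  have hCh : C ≤ h := by rw [hh]; linarith [norm_nonneg lam]
  -- Euclidean helpers
  have ensq : ∀ v : EuclideanSpace ℝ (Fin m), ‖v‖^2 = ∑ k, (v k)^2 := by
    intro v
    rw [EuclideanSpace.norm_eq, Real.sq_sqrt (Finset.sum_nonneg fun i _ => sq_nonneg _)]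
    simp [Real.norm_eq_abs, sq_abs]
  have rinner : ∀ u v : EuclideanSpace ℝ (Fin m), ⟪u, v⟫ = ∑ k, (u k) * (v k) := by
    intro u v
    simp [PiLp.inner_apply, RCLike.inner_apply, mul_comm]
  have hcoord : ∀ (v : EuclideanSpace ℝ (Fin m)) (k : Fin m), v k ≤ ‖v‖ := by
    intro v k
    have h2 : (v k)^2 ≤ ∑ j, (v j)^2 :=
      Finset.single_le_sum (fun j _ => sq_nonneg (v j)) (Finset.mem_univ k)
    nlinarith [norm_nonneg v, le_abs_self (v k), sq_abs (v k), ensq v]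
  -- queue basics
  have hQnn : ∀ t k, 0 ≤ Q t k := by
    intro t k
    induction t with
    | zero => rw [hQ0]; exact le_max_left _ _
    | succ t ih =>
      rw [hQr]
      rcases le_or_gt 0 (g k (x (t+1))) with h'|h'
      · exact le_max_of_le_right (by linarith)
      · exact le_max_of_le_left (by linarith)
  have hQg : ∀ t k, 0 ≤ Q t k + g k (x t) := by
    intro t k
    cases t with
    | zero => rw [hQ0]; have := le_max_right (0:ℝ) (-(g k (x 0))); linarith
    | succ t => rw [hQr]; have := le_max_left (-(g k (x (t+1)))) (Q t k + g k (x (t+1))); linarith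
  have hgle : ∀ t k, g k (x (t+1)) ≤ Q (t+1) k - Q t k := by
    intro t k
    rw [hQr]
    have := le_max_right (-(g k (x (t+1)))) (Q t k + g k (x (t+1)))
    linarith
  have hQ0sq : ‖Q 0‖^2 ≤ ‖gvec g (x 0)‖^2 := by
    rw [ensq, ensq]
    refine Finset.sum_le_sum fun k _ => ?_
    rw [hQ0]
    have : (gvec g (x 0)) k = g k (x 0) := rfl
    rw [this]
    rcases le_total (g k (x 0)) 0 with h'|h'
    · rw [max_eq_right (by linarith)]; nlinarith
    · rw [max_eq_left (by linarith)]; nlinarith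
  have hQ0C : ‖Q 0‖ ≤ C := by
    nlinarith [hQ0sq, hgC (x 0) (hxX 0), norm_nonneg (Q 0), norm_nonneg (gvec g (x 0))]
  -- Lemma 7 (scaled by 2γ)
  have L7 : ∀ τ : ℕ, ‖Q τ‖ ≤ h →
      γ * ‖Q (τ+1)‖^2 - γ * ‖Q τ‖^2 ≤
        (2*γ*(∑ k, lam k * Q (τ+1) k) - ‖xstar - x (τ+1)‖^2 + γ*‖gvec g (x (τ+1))‖^2)
        - (2*γ*(∑ k, lam k * Q τ k) - ‖xstar - x τ‖^2 + γ*‖gvec g (x τ)‖^2) := by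
    intro τ hQb
    -- descent and convexity facts
    have hdf := cvb_descent_lemma hXcv f Gf Lf hfd hGfLip (hxX τ) (hxX (τ+1))
    have hdg : ∀ k : Fin m, g k (x (τ+1)) ≤ g k (x τ) + ⟪Gg k (x τ), x (τ+1) - x τ⟫
        + Lg k / 2 * ‖x (τ+1) - x τ‖^2 :=
      fun k => cvb_descent_lemma hXcv (g k) (Gg k) (Lg k) (hgd k) (hGgLip k) (hxX τ) (hxX (τ+1))
    have hcf := cvb_grad_convex_ineq f Gf hf hfd (hxX τ) hxs
    have hcg : ∀ k : Fin m, g k (x τ) + ⟪Gg k (x τ), xstar - x τ⟫ ≤ g k xstar :=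
      fun k => cvb_grad_convex_ineq (g k) (Gg k) (hg k) (hgd k) (hxX τ) hxs
    -- drift
    have hdrift : (1/2)*‖Q (τ+1)‖^2 - (1/2)*‖Q τ‖^2 ≤
        (∑ k, Q τ k * g k (x (τ+1))) + ∑ k, (g k (x (τ+1)))^2 := by
      have hco : ∀ k : Fin m, (1/2)*(Q (τ+1) k)^2 - (1/2)*(Q τ k)^2 ≤
          Q τ k * g k (x (τ+1)) + (g k (x (τ+1)))^2 := by
        intro k
        rcases le_total (-(g k (x (τ+1)))) (Q τ k + g k (x (τ+1))) with hle | hle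
        · rw [hQr τ k, max_eq_right hle]; nlinarith [sq_nonneg (g k (x (τ+1)))]
        · rw [hQr τ k, max_eq_left hle]; nlinarith [sq_nonneg (Q τ k + g k (x (τ+1)))]
      have e3 : (1/2)*‖Q (τ+1)‖^2 - (1/2)*‖Q τ‖^2
          = ∑ k, ((1/2)*(Q (τ+1) k)^2 - (1/2)*(Q τ k)^2) := by
        rw [ensq, ensq, Finset.mul_sum, Finset.mul_sum, ← Finset.sum_sub_distrib]
      rw [e3, ← Finset.sum_add_distrib]
      exact Finset.sum_le_sum fun k _ => hco k
    -- pushback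
    have hpb := cvb_proj_pushback hXcv (hxX (τ+1)) (fun y hy => hproj τ y hy) hxs
    have e1 : ‖x (τ+1) - (x τ - γ • d τ)‖^2
        = ‖x (τ+1) - x τ‖^2 + 2*γ*⟪d τ, x (τ+1) - x τ⟫ + γ^2*‖d τ‖^2 := by
      rw [show x (τ+1) - (x τ - γ • d τ) = (x (τ+1) - x τ) + γ • d τ from by abel,
        norm_add_sq_real, real_inner_smul_right, norm_smul, Real.norm_eq_abs, abs_of_pos hγ,
        real_inner_comm]
      ring
    have e2 : ‖xstar - (x τ - γ • d τ)‖^2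
        = ‖xstar - x τ‖^2 + 2*γ*⟪d τ, xstar - x τ⟫ + γ^2*‖d τ‖^2 := by
      rw [show xstar - (x τ - γ • d τ) = (xstar - x τ) + γ • d τ from by abel,
        norm_add_sq_real, real_inner_smul_right, norm_smul, Real.norm_eq_abs, abs_of_pos hγ,
        real_inner_comm]
      ring
    have hpbs : 2*γ*⟪d τ, x (τ+1) - x τ⟫ + ‖x (τ+1) - x τ‖^2 + ‖xstar - x (τ+1)‖^2
        ≤ 2*γ*⟪d τ, xstar - x τ⟫ + ‖xstar - x τ‖^2 := by
      rw [e1, e2] at hpb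
      linarith
    -- decomposition of the step direction
    have hdin : ∀ z : EuclideanSpace ℝ (Fin n), ⟪d τ, z⟫
        = ⟪Gf (x τ), z⟫ + ∑ k, (Q τ k + g k (x τ)) * ⟪Gg k (x τ), z⟫ := by
      intro z
      rw [hd τ, inner_add_left, sum_inner]
      congr 1
      exact Finset.sum_congr rfl fun k _ => real_inner_smul_left _ _ _
    -- Cauchy–Schwarz for the multipliers of the curvature terms
    have hyLg : ∑ k, (Q τ k + g k (x τ)) * Lg k ≤ (h + C) * ‖Lg‖ := by
      have e4 : ∑ k, (Q τ k + g k (x τ)) * Lg k = ⟪Q τ + gvec g (x τ), Lg⟫ := by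
        rw [rinner]
        exact Finset.sum_congr rfl fun k _ => rfl
      rw [e4]
      calc ⟪Q τ + gvec g (x τ), Lg⟫ ≤ ‖Q τ + gvec g (x τ)‖ * ‖Lg‖ := real_inner_le_norm _ _
        _ ≤ (‖Q τ‖ + ‖gvec g (x τ)‖) * ‖Lg‖ :=
            mul_le_mul_of_nonneg_right (norm_add_le _ _) (norm_nonneg _)
        _ ≤ (h + C) * ‖Lg‖ :=
            mul_le_mul_of_nonneg_right (by linarith [hgC (x τ) (hxX τ)]) (norm_nonneg _)
    -- step size condition
    have hcoef : γ * (Lf + β^2 + ∑ k, (Q τ k + g k (x τ)) * Lg k) ≤ 1 := by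
      have h2 : Lf + β^2 + ∑ k, (Q τ k + g k (x τ)) * Lg k ≤ 1/γ := by
        rw [hh] at hyLg
        rw [hD] at hγcond
        have hbr : ‖Lg‖ * R / Real.sqrt γ = (R / Real.sqrt γ) * ‖Lg‖ := by ring
        linarith [hyLg, hγcond, hbr]
      have h3 := mul_le_mul_of_nonneg_left h2 hγ.le
      calc γ * (Lf + β^2 + ∑ k, (Q τ k + g k (x τ)) * Lg k) ≤ γ * (1/γ) := h3
        _ = 1 := by field_simp
    have hSc : γ * (Lf + β^2 + ∑ k, (Q τ k + g k (x τ)) * Lg k) * ‖x (τ+1) - x τ‖^2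
        ≤ ‖x (τ+1) - x τ‖^2 := by
      have := mul_le_mul_of_nonneg_right hcoef (sq_nonneg ‖x (τ+1) - x τ‖)
      simpa using this
    -- β-smoothness / telescoping of the constraint values
    have hbeta : (∑ k, (g k (x (τ+1)))^2) - (∑ k, g k (x τ) * g k (x (τ+1)))
        ≤ (1/2)*‖gvec g (x (τ+1))‖^2 - (1/2)*‖gvec g (x τ)‖^2
          + β^2/2 * ‖x (τ+1) - x τ‖^2 := by
      have hb1 : ‖gvec g (x (τ+1)) - gvec g (x τ)‖^2 ≤ β^2 * ‖x (τ+1) - x τ‖^2 := by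
        have := hgLip (x (τ+1)) (hxX (τ+1)) (x τ) (hxX τ)
        nlinarith [norm_nonneg (gvec g (x (τ+1)) - gvec g (x τ)), norm_nonneg (x (τ+1) - x τ)]
      have hb2 := norm_sub_sq_real (gvec g (x (τ+1))) (gvec g (x τ))
      have hb3 : ⟪gvec g (x (τ+1)), gvec g (x τ)⟫ = ∑ k, g k (x (τ+1)) * g k (x τ) := by
        rw [rinner]
        exact Finset.sum_congr rfl fun k _ => rfl
      have hb4 : ‖gvec g (x (τ+1))‖^2 = ∑ k, (g k (x (τ+1)))^2 := by
        rw [ensq]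
        exact Finset.sum_congr rfl fun k _ => rfl
      have hb6 : ∑ k, g k (x τ) * g k (x (τ+1)) = ∑ k, g k (x (τ+1)) * g k (x τ) :=
        Finset.sum_congr rfl fun k _ => mul_comm _ _
      linarith [hb1, hb2, hb3, hb4, hb6]
    -- multiplier-weighted descent on the constraints
    have hyg : ∑ k, (Q τ k + g k (x τ)) * g k (x (τ+1)) ≤
        (∑ k, (Q τ k + g k (x τ)) * g k (x τ))
        + (∑ k, (Q τ k + g k (x τ)) * ⟪Gg k (x τ), x (τ+1) - x τ⟫)
        + (∑ k, (Q τ k + g k (x τ)) * Lg k) * (‖x (τ+1) - x τ‖^2 / 2) := by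
      have h1 : ∀ k : Fin m, (Q τ k + g k (x τ)) * g k (x (τ+1)) ≤
          (Q τ k + g k (x τ)) * g k (x τ)
          + (Q τ k + g k (x τ)) * ⟪Gg k (x τ), x (τ+1) - x τ⟫
          + ((Q τ k + g k (x τ)) * Lg k) * (‖x (τ+1) - x τ‖^2 / 2) := by
        intro k
        have h2 := mul_le_mul_of_nonneg_left (hdg k) (hQg τ k)
        refine le_trans h2 (le_of_eq (by ring))
      calc ∑ k, (Q τ k + g k (x τ)) * g k (x (τ+1))
          ≤ ∑ k, ((Q τ k + g k (x τ)) * g k (x τ)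
            + (Q τ k + g k (x τ)) * ⟪Gg k (x τ), x (τ+1) - x τ⟫
            + ((Q τ k + g k (x τ)) * Lg k) * (‖x (τ+1) - x τ‖^2 / 2)) :=
            Finset.sum_le_sum fun k _ => h1 k
        _ = _ := by rw [Finset.sum_add_distrib, Finset.sum_add_distrib, ← Finset.sum_mul]
    -- duality
    have hdual : f xstar ≤ f (x (τ+1)) + ∑ k, lam k * g k (x (τ+1)) :=
      hduality.1 (Set.mem_image_of_mem _ (hxX (τ+1)))
    have hlamQ : ∑ k, lam k * g k (x (τ+1)) ≤ (∑ k, lam k * Q (τ+1) k) - ∑ k, lam k * Q τ k := by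
      have h1 : ∑ k, lam k * g k (x (τ+1)) ≤ ∑ k, lam k * (Q (τ+1) k - Q τ k) :=
        Finset.sum_le_sum fun k _ => mul_le_mul_of_nonneg_left (hgle τ k) (hlam k)
      have h2 : ∑ k, lam k * (Q (τ+1) k - Q τ k)
          = (∑ k, lam k * Q (τ+1) k) - ∑ k, lam k * Q τ k := by
        rw [← Finset.sum_sub_distrib]
        exact Finset.sum_congr rfl fun k _ => by ring
      linarith
    have hsplitQ : ∑ k, Q τ k * g k (x (τ+1))
        = (∑ k, (Q τ k + g k (x τ)) * g k (x (τ+1))) - ∑ k, g k (x τ) * g k (x (τ+1)) := by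
      rw [← Finset.sum_sub_distrib]
      exact Finset.sum_congr rfl fun k _ => by ring
    have hdu : ⟪d τ, xstar - x τ⟫ ≤ (f xstar - f (x τ))
        + ((∑ k, (Q τ k + g k (x τ)) * g k xstar) - ∑ k, (Q τ k + g k (x τ)) * g k (x τ)) := by
      rw [hdin]
      have h1 : ∑ k, (Q τ k + g k (x τ)) * ⟪Gg k (x τ), xstar - x τ⟫
          ≤ ∑ k, (Q τ k + g k (x τ)) * (g k xstar - g k (x τ)) :=
        Finset.sum_le_sum fun k _ => mul_le_mul_of_nonneg_left (by linarith [hcg k]) (hQg τ k)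
      have h2 : ∑ k, (Q τ k + g k (x τ)) * (g k xstar - g k (x τ))
          = (∑ k, (Q τ k + g k (x τ)) * g k xstar) - ∑ k, (Q τ k + g k (x τ)) * g k (x τ) := by
        rw [← Finset.sum_sub_distrib]
        exact Finset.sum_congr rfl fun k _ => by ring
      linarith [hcf]
    have hystar : ∑ k, (Q τ k + g k (x τ)) * g k xstar ≤ 0 :=
      Finset.sum_nonpos fun k _ => mul_nonpos_of_nonneg_of_nonpos (hQg τ k) (hxsFeas k)
    -- scale everything by 2γ and combine
    have c2γ : (0:ℝ) ≤ 2*γ := by positivity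
    have s1 := mul_le_mul_of_nonneg_left hdrift c2γ
    have s2 := mul_le_mul_of_nonneg_left hdf c2γ
    have s3 := mul_le_mul_of_nonneg_left hyg c2γ
    have s4 := mul_le_mul_of_nonneg_left hdu c2γ
    have s5 : 2*γ*(∑ k, (Q τ k + g k (x τ)) * g k xstar) ≤ 0 :=
      mul_nonpos_of_nonneg_of_nonpos c2γ hystar
    have s6 := mul_le_mul_of_nonneg_left hdual c2γ
    have s7 := mul_le_mul_of_nonneg_left hlamQ c2γ
    have s8 := mul_le_mul_of_nonneg_left hbeta c2γ
    have s9 : 2*γ*(∑ k, Q τ k * g k (x (τ+1)))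
        = 2*γ*((∑ k, (Q τ k + g k (x τ)) * g k (x (τ+1)))
            - ∑ k, g k (x τ) * g k (x (τ+1))) := by
      rw [hsplitQ]
    have s11 : 2*γ*⟪d τ, x (τ+1) - x τ⟫
        = 2*γ*(⟪Gf (x τ), x (τ+1) - x τ⟫
            + ∑ k, (Q τ k + g k (x τ)) * ⟪Gg k (x τ), x (τ+1) - x τ⟫) := by
      rw [hdin]
    linarith [s1, s2, s3, s4, s5, s6, s7, s8, s9, s11, hpbs, hSc]
  -- queue bound
  have Qb : ∀ t, ‖Q t‖ ≤ h := by
    intro t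
    induction t using Nat.strong_induction_on with
    | _ t ih =>
      match t with
      | 0 => exact le_trans hQ0C hCh
      | Nat.succ t =>
        have hsum : γ*‖Q (t+1)‖^2 - γ*‖Q 0‖^2 ≤
            (2*γ*(∑ k, lam k * Q (t+1) k) - ‖xstar - x (t+1)‖^2 + γ*‖gvec g (x (t+1))‖^2)
            - (2*γ*(∑ k, lam k * Q 0 k) - ‖xstar - x 0‖^2 + γ*‖gvec g (x 0)‖^2) := by
          have h1 := Finset.sum_le_sum
            (fun τ (hτ : τ ∈ Finset.range (t+1)) => L7 τ (ih τ (Finset.mem_range.1 hτ)))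
          have e1 := Finset.sum_range_sub (fun τ => γ*‖Q τ‖^2) (t+1)
          have e2 := Finset.sum_range_sub
            (fun τ => 2*γ*(∑ k, lam k * Q τ k) - ‖xstar - x τ‖^2 + γ*‖gvec g (x τ)‖^2) (t+1)
          calc γ*‖Q (t+1)‖^2 - γ*‖Q 0‖^2
              = ∑ τ ∈ Finset.range (t+1), (γ*‖Q (τ+1)‖^2 - γ*‖Q τ‖^2) := e1.symm
            _ ≤ _ := le_trans h1 (le_of_eq e2)
        have hb1 : ∑ k, lam k * Q (t+1) k ≤ ‖lam‖ * ‖Q (t+1)‖ := by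
          rw [← rinner]; exact real_inner_le_norm _ _
        have hb1' := mul_le_mul_of_nonneg_left hb1 (by positivity : (0:ℝ) ≤ 2*γ)
        have hb2 : 0 ≤ ∑ k, lam k * Q 0 k :=
          Finset.sum_nonneg fun k _ => mul_nonneg (hlam k) (hQnn 0 k)
        have hb2' := mul_nonneg (by positivity : (0:ℝ) ≤ 2*γ) hb2
        have hb3 : ‖xstar - x 0‖^2 ≤ R^2 := by
          nlinarith [hR xstar hxs (x 0) (hxX 0), norm_nonneg (xstar - x 0)]
        have hb4 : ‖gvec g (x (t+1))‖^2 ≤ C^2 := by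
          nlinarith [hgC (x (t+1)) (hxX (t+1)), norm_nonneg (gvec g (x (t+1)))]
        have hb4' := mul_le_mul_of_nonneg_left hb4 hγ.le
        have hb5 : γ*‖Q 0‖^2 - γ*‖gvec g (x 0)‖^2 ≤ 0 := by nlinarith [hQ0sq, hγ.le]
        have hq : γ * ‖Q (t+1)‖^2 ≤ 2*γ*(‖lam‖*‖Q (t+1)‖) + R^2 + γ*C^2 := by
          nlinarith [hsum, hb1', hb2', hb3, hb4', hb5, sq_nonneg ‖xstar - x (t+1)‖]
        have hq0 : (0:ℝ) ≤ ‖Q (t+1)‖ := norm_nonneg _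
        by_contra hcon
        push_neg at hcon
        rw [hh] at hcon
        have hs2 : γ * (R / Real.sqrt γ)^2 = R^2 := by
          rw [div_pow, Real.sq_sqrt hγ.le]
          field_simp
        have hL0 : (0:ℝ) ≤ ‖lam‖ := norm_nonneg _
        have hkey : (0:ℝ) < ‖Q (t+1)‖ := by linarith
        have hp1 : 0 < γ * (‖Q (t+1)‖ * (‖Q (t+1)‖ - (2*‖lam‖ + R/Real.sqrt γ + C))) :=
          mul_pos hγ (mul_pos hkey (by linarith))
        have hp2 : 0 ≤ γ * ((R/Real.sqrt γ + C) * (‖Q (t+1)‖ - (2*‖lam‖ + R/Real.sqrt γ + C))) :=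
          mul_nonneg hγ.le (mul_nonneg (by linarith) (by linarith))
        nlinarith [hq, hs2, hp1, hp2, mul_nonneg (mul_nonneg hγ.le hs0) hC0,
          mul_nonneg (mul_nonneg hγ.le hL0) hs0, mul_nonneg (mul_nonneg hγ.le hL0) hC0]
  -- final step
  intro t ht k
  have htR : (0:ℝ) < t := by exact_mod_cast ht
  have hsumg : ∑ τ ∈ Finset.range t, g k (x (τ+1)) ≤ h := by
    have h1 : ∑ τ ∈ Finset.range t, g k (x (τ+1)) ≤ ∑ τ ∈ Finset.range t, (Q (τ+1) k - Q τ k) :=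
      Finset.sum_le_sum fun τ _ => hgle τ k
    have h2 : ∑ τ ∈ Finset.range t, (Q (τ+1) k - Q τ k) = Q t k - Q 0 k :=
      Finset.sum_range_sub (fun τ => Q τ k) t
    have h3 := hcoord (Q t) k
    have h4 := hQnn 0 k
    have h5 := Qb t
    linarith
  have hw0 : ∀ τ ∈ Finset.range t, (0:ℝ) ≤ (t:ℝ)⁻¹ := fun τ _ => by positivity
  have hw1 : ∑ τ ∈ Finset.range t, (t:ℝ)⁻¹ = 1 := by
    rw [Finset.sum_const, Finset.card_range, nsmul_eq_mul]
    field_simp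
  have hmem : ∀ τ ∈ Finset.range t, x (τ+1) ∈ X := fun τ _ => hxX (τ+1)
  have hj := (hg k).map_sum_le hw0 hw1 hmem
  rw [show (t:ℝ)⁻¹ • ∑ τ ∈ Finset.range t, x (τ+1)
      = ∑ τ ∈ Finset.range t, (t:ℝ)⁻¹ • x (τ+1) from Finset.smul_sum]
  refine le_trans hj ?_
  simp only [smul_eq_mul]
  have hfin : ∑ τ ∈ Finset.range t, (t:ℝ)⁻¹ * g k (x (τ+1))
      = (t:ℝ)⁻¹ * ∑ τ ∈ Finset.range t, g k (x (τ+1)) := by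
    rw [Finset.mul_sum]
  rw [hfin, one_div]
  exact mul_le_mul_of_nonneg_left hsumg (by positivity)
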